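/- Let λ₀ ∈ C with 0 < |λ₀| < 1, let L₁, L₂ : Σ* → CP¹ be continuous families of lines on a punctured neighborhood of 0 that both converge as z → 0, and for each z let h_k(z) = f^{1/2}π_{L_k(z)} + f^{-1/2}π_{L_k(z)⊥} be unnormalized simple factors with the same singularity λ₀. If lim_{z→0} L₁(z) = lim_{z→0} L₂(z) in CP¹, then on every region R ⊂ CP¹ bounded away from {λ₀, 1/λ̄₀}, sup_R ‖h₁(z)h₂(z)^{-1} - I‖ → 0 as z → 0. -/

import Mathlib

open Matrix Filter Topology
open scoped Matrix.Norms.L2Operator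

/-- **Simple factor limit.**  If two families of unnormalized simple factors
`h_k(z) = s·π_{L_k(z)} + s⁻¹·π_{L_k(z)⊥}` share the same singularity `λ₀` (`0 < |λ₀| < 1`)
and the lines `L₁(z)`, `L₂(z)` converge to the same line as `z → 0`, then
`h₁h₂⁻¹ → I` uniformly on every region bounded away from `{λ₀, 1/λ̄₀}`. -/
theorem stmt15 (lam0 : ℂ) (h0 : 0 < ‖lam0‖) (h1 : ‖lam0‖ < 1)
    (f : ℂ → ℂ)
    (hfrat : ∀ lam : ℂ, lam ≠ lam0 → f lam =
      ((1 - lam0) * (lam - (starRingEnd ℂ lam0)⁻¹)) /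
        ((1 - (starRingEnd ℂ lam0)⁻¹) * (lam - lam0)))
    (s : ℂ → ℂ) (hs : ∀ lam, s lam ^ 2 = f lam)
    (P₁ P₂ : ℂ → Matrix (Fin 2) (Fin 2) ℂ) (P₀ : Matrix (Fin 2) (Fin 2) ℂ)
    (hP₁ : ∀ z, P₁ z * P₁ z = P₁ z ∧ (P₁ z)ᴴ = P₁ z ∧ (P₁ z).trace = 1)
    (hP₂ : ∀ z, P₂ z * P₂ z = P₂ z ∧ (P₂ z)ᴴ = P₂ z ∧ (P₂ z).trace = 1)
    (hP₀ : P₀ * P₀ = P₀ ∧ P₀ᴴ = P₀ ∧ P₀.trace = 1)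
    (hc₁ : Tendsto P₁ (nhdsWithin (0 : ℂ) {0}ᶜ) (nhds P₀))
    (hc₂ : Tendsto P₂ (nhdsWithin (0 : ℂ) {0}ᶜ) (nhds P₀))
    (h₁ h₂ : ℂ → ℂ → Matrix (Fin 2) (Fin 2) ℂ)
    (hh₁ : h₁ = fun z lam =>
      s lam • P₁ z + (s lam)⁻¹ • ((1 : Matrix (Fin 2) (Fin 2) ℂ) - P₁ z))
    (hh₂ : h₂ = fun z lam =>
      s lam • P₂ z + (s lam)⁻¹ • ((1 : Matrix (Fin 2) (Fin 2) ℂ) - P₂ z)) :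
    ∀ R : Set ℂ,
      (∃ δ > 0, ∀ lam ∈ R, δ ≤ dist lam lam0 ∧ δ ≤ dist lam ((starRingEnd ℂ lam0)⁻¹)) →
      ∀ ε > 0, ∀ᶠ z in nhdsWithin (0 : ℂ) {0}ᶜ, ∀ lam ∈ R,
        ‖h₁ z lam * (h₂ z lam)⁻¹ - 1‖ < ε := by
  rintro R ⟨δ, hδ, hR⟩ ε hε
  set u : ℂ := (starRingEnd ℂ lam0)⁻¹ with hu
  have hunorm : ‖u‖ = ‖lam0‖⁻¹ := by
    simp [hu]
  have hu1 : (1 : ℝ) < ‖u‖ := by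
    rw [hunorm]
    exact (one_lt_inv₀ h0).2 h1
  have hlam0ne1 : (1 : ℂ) - lam0 ≠ 0 := by
    intro h
    have : lam0 = 1 := by linear_combination -h
    rw [this] at h1; simp at h1
  have hune1 : (1 : ℂ) - u ≠ 0 := by
    intro h
    have : u = 1 := by linear_combination -h
    rw [this] at hu1; simp at hu1
  have ha : 0 < ‖(1:ℂ) - lam0‖ := norm_pos_iff.2 hlam0ne1
  have hb : 0 < ‖(1:ℂ) - u‖ := norm_pos_iff.2 hune1
  set m : ℝ := ‖lam0 - u‖ with hm
  have hm0 : 0 ≤ m := norm_nonneg _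
  set K : ℝ := ‖(1:ℂ) - lam0‖ / ‖(1:ℂ) - u‖ * (1 + m / δ) with hK
  set K' : ℝ := ‖(1:ℂ) - u‖ / ‖(1:ℂ) - lam0‖ * (1 + m / δ) with hK'
  have key : ∀ a b d1 d2 : ℝ, 0 < a → 0 < b → δ ≤ d1 → d2 ≤ d1 + m →
      a * d2 / (b * d1) ≤ a / b * (1 + m / δ) := by
    intro a b d1 d2 hA hB hd hle
    have hd1 : 0 < d1 := lt_of_lt_of_le hδ hd
    rw [div_le_iff₀ (by positivity)]
    have he : a / b * (1 + m / δ) * (b * d1) = a * (d1 + m / δ * d1) := by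
      field_simp
    rw [he]
    have h2 : m ≤ m / δ * d1 := by
      rw [div_mul_eq_mul_div, le_div_iff₀ hδ]
      nlinarith
    nlinarith
  -- basic facts for lam ∈ R
  have hlamfacts : ∀ lam ∈ R, lam ≠ lam0 ∧ lam ≠ u ∧ f lam ≠ 0 ∧ s lam ≠ 0 ∧
      ‖f lam‖ ≤ K ∧ ‖(f lam)⁻¹‖ ≤ K' := by
    intro lam hlam
    obtain ⟨hd1, hd2⟩ := hR lam hlam
    rw [dist_eq_norm] at hd1 hd2
    have hne1 : lam ≠ lam0 := by
      intro h; rw [h] at hd1; simp at hd1; linarith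
    have hne2 : lam ≠ u := by
      intro h; rw [h] at hd2; simp at hd2; linarith
    have hfval := hfrat lam hne1
    have hnum : (1 - lam0) * (lam - u) ≠ 0 :=
      mul_ne_zero hlam0ne1 (sub_ne_zero.2 hne2)
    have hden : (1 - u) * (lam - lam0) ≠ 0 :=
      mul_ne_zero hune1 (sub_ne_zero.2 hne1)
    have hfne : f lam ≠ 0 := by
      rw [hfval]; exact div_ne_zero hnum hden
    have hsne : s lam ≠ 0 := by
      intro h
      apply hfne
      rw [← hs lam, h]; ring
    have hnormf : ‖f lam‖ = ‖(1:ℂ) - lam0‖ * ‖lam - u‖ / (‖(1:ℂ) - u‖ * ‖lam - lam0‖) := by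
      rw [hfval, norm_div, norm_mul, norm_mul]
    have hd1pos : (0:ℝ) < ‖lam - lam0‖ := lt_of_lt_of_le hδ hd1
    have hd2pos : (0:ℝ) < ‖lam - u‖ := lt_of_lt_of_le hδ hd2
    have htri1 : ‖lam - u‖ ≤ ‖lam - lam0‖ + m := by
      calc ‖lam - u‖ = ‖(lam - lam0) + (lam0 - u)‖ := by ring_nf
        _ ≤ ‖lam - lam0‖ + ‖lam0 - u‖ := norm_add_le _ _
    have htri2 : ‖lam - lam0‖ ≤ ‖lam - u‖ + m := by
      calc ‖lam - lam0‖ = ‖(lam - u) + (u - lam0)‖ := by ring_nf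
        _ ≤ ‖lam - u‖ + ‖u - lam0‖ := norm_add_le _ _
        _ = ‖lam - u‖ + m := by rw [hm, ← norm_neg (lam0 - u)]; ring_nf
    refine ⟨hne1, hne2, hfne, hsne, ?_, ?_⟩
    · rw [hnormf, hK]
      exact key _ _ _ _ ha hb hd1 htri1
    · have hni : ‖(f lam)⁻¹‖ = ‖(1:ℂ) - u‖ * ‖lam - lam0‖ / (‖(1:ℂ) - lam0‖ * ‖lam - u‖) := by
        rw [norm_inv, hnormf, inv_div]
      rw [hni, hK']
      exact key _ _ _ _ hb ha hd2 htri2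
  -- the three matrix families tending to zero
  set N₀ : ℂ → Matrix (Fin 2) (Fin 2) ℂ := fun z =>
    P₁ z * P₂ z + (1 - P₁ z) * (1 - P₂ z) - 1 with hN₀
  set N₁ : ℂ → Matrix (Fin 2) (Fin 2) ℂ := fun z => P₁ z * (1 - P₂ z) with hN₁
  set N₂ : ℂ → Matrix (Fin 2) (Fin 2) ℂ := fun z => (1 - P₁ z) * P₂ z with hN₂
  have hT₀ : Tendsto N₀ (nhdsWithin (0 : ℂ) {0}ᶜ) (nhds 0) := by
    have := ((hc₁.mul hc₂).add
      (((tendsto_const_nhds (x := (1 : Matrix (Fin 2) (Fin 2) ℂ))).sub hc₁).mul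
        ((tendsto_const_nhds (x := (1 : Matrix (Fin 2) (Fin 2) ℂ))).sub hc₂))).sub
      (tendsto_const_nhds (x := (1 : Matrix (Fin 2) (Fin 2) ℂ)))
    have heq : P₀ * P₀ + (1 - P₀) * (1 - P₀) - 1 = 0 := by
      rw [one_sub_mul, mul_one_sub, hP₀.1]
      abel
    rwa [heq] at this
  have hT₁ : Tendsto N₁ (nhdsWithin (0 : ℂ) {0}ᶜ) (nhds 0) := by
    have := hc₁.mul ((tendsto_const_nhds (x := (1 : Matrix (Fin 2) (Fin 2) ℂ))).sub hc₂)
    have heq : P₀ * (1 - P₀) = 0 := by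
      have h := hP₀.1
      rw [mul_one_sub, h, sub_self]
    rwa [heq] at this
  have hT₂ : Tendsto N₂ (nhdsWithin (0 : ℂ) {0}ᶜ) (nhds 0) := by
    have := ((tendsto_const_nhds (x := (1 : Matrix (Fin 2) (Fin 2) ℂ))).sub hc₁).mul hc₂
    have heq : (1 - P₀) * P₀ = 0 := by
      have h := hP₀.1
      rw [one_sub_mul, h, sub_self]
    rwa [heq] at this
  have hTsum : Tendsto (fun z => ‖N₀ z‖ + K * ‖N₁ z‖ + K' * ‖N₂ z‖)
      (nhdsWithin (0 : ℂ) {0}ᶜ) (nhds 0) := by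
    have : Tendsto (fun z => ‖N₀ z‖ + K * ‖N₁ z‖ + K' * ‖N₂ z‖)
        (nhdsWithin (0 : ℂ) {0}ᶜ) (nhds (‖(0 : Matrix (Fin 2) (Fin 2) ℂ)‖
          + K * ‖(0 : Matrix (Fin 2) (Fin 2) ℂ)‖ + K' * ‖(0 : Matrix (Fin 2) (Fin 2) ℂ)‖)) :=
      ((hT₀.norm.add ((tendsto_const_nhds (x := K)).mul hT₁.norm)).add
        ((tendsto_const_nhds (x := K')).mul hT₂.norm))
    simpa using this
  filter_upwards [hTsum.eventually (eventually_lt_nhds hε)] with z hz lam hlam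
  obtain ⟨hne1, hne2, hfne, hsne, hfb, hfib⟩ := hlamfacts lam hlam
  set c : ℂ := s lam with hc
  have hc2 : c ^ 2 = f lam := hs lam
  -- the inverse of h₂
  have hinv : (h₂ z lam)⁻¹ = c⁻¹ • P₂ z + c • (1 - P₂ z) := by
    apply Matrix.inv_eq_right_inv
    rw [hh₂]
    simp only []
    rw [add_mul, mul_add, mul_add, smul_mul_smul_comm, smul_mul_smul_comm,
      smul_mul_smul_comm, smul_mul_smul_comm, mul_inv_cancel₀ hsne, inv_mul_cancel₀ hsne]
    have hB := (hP₂ z).1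
    have e1 : P₂ z * (1 - P₂ z) = 0 := by rw [mul_one_sub, hB, sub_self]
    have e2 : (1 - P₂ z) * P₂ z = 0 := by rw [one_sub_mul, hB, sub_self]
    have e3 : (1 - P₂ z) * (1 - P₂ z) = 1 - P₂ z := by
      rw [one_sub_mul, mul_one_sub, hB]; abel
    rw [← hc, hB, e1, e2, e3, one_smul, one_smul, smul_zero, smul_zero]
    abel
  have hprod : h₁ z lam * (h₂ z lam)⁻¹ - 1 =
      N₀ z + f lam • N₁ z + (f lam)⁻¹ • N₂ z := by
    rw [hinv, hh₁]
    simp only []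
    rw [add_mul, mul_add, mul_add, smul_mul_smul_comm, smul_mul_smul_comm,
      smul_mul_smul_comm, smul_mul_smul_comm, mul_inv_cancel₀ hsne, inv_mul_cancel₀ hsne,
      ← hc, one_smul, one_smul]
    have e1 : c * c = f lam := by rw [← hc2]; ring
    have e2 : c⁻¹ * c⁻¹ = (f lam)⁻¹ := by rw [← mul_inv, e1]
    rw [e1, e2, hN₀, hN₁, hN₂]
    beta_reduce
    abel
  have hbound : ‖h₁ z lam * (h₂ z lam)⁻¹ - 1‖ ≤ ‖N₀ z‖ + K * ‖N₁ z‖ + K' * ‖N₂ z‖ := by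
    rw [hprod]
    calc ‖N₀ z + f lam • N₁ z + (f lam)⁻¹ • N₂ z‖
        ≤ ‖N₀ z + f lam • N₁ z‖ + ‖(f lam)⁻¹ • N₂ z‖ := norm_add_le _ _
      _ ≤ ‖N₀ z‖ + ‖f lam • N₁ z‖ + ‖(f lam)⁻¹ • N₂ z‖ := by
          gcongr; exact norm_add_le _ _
      _ = ‖N₀ z‖ + ‖f lam‖ * ‖N₁ z‖ + ‖(f lam)⁻¹‖ * ‖N₂ z‖ := by
          rw [norm_smul, norm_smul]
      _ ≤ ‖N₀ z‖ + K * ‖N₁ z‖ + K' * ‖N₂ z‖ := by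
          gcongr <;> first | exact hfb | exact hfib
  exact lt_of_le_of_lt hbound hz
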